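/- Small-gain dissipation implication for the zero-input subsystems: let δ ∈ (0,1) and c_1 = c_2 = 0. For every i ∈ {1,2} and all x_1, x_2 ∈ ℝ, if (1 − δ)·g(|x_i|) ≥ h(|x_{3−i}|), then sign(x_i)·f_i(x_1, x_2) ≤ −25δ·g(|x_i|). -/

import Mathlib

noncomputable section

/-- The constant `a = (4π²n + 3π²)/2`. -/
def a (n : ℕ) : ℝ := (4 * Real.pi ^ 2 * n + 3 * Real.pi ^ 2) / 2

/-- The function `g` from the example. -/
def g (n : ℕ) (r : ℝ) : ℝ :=
  if |r| ≤ a n then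
    Real.tanh (2 * r) +
      ∑ i ∈ Finset.Icc 1 n,
        Real.sign r * (1 + Real.sign r * Real.tanh (2 * (r - Real.sign r * (2 * Real.pi ^ 2 * i))))
  else
    Real.sign r * ((2 * n + 1) + (r - Real.sign r * a n) ^ 2)

/-- The function `h` from the example. -/
def h (n : ℕ) (r : ℝ) : ℝ :=
  Real.sin (r / (2 * Real.pi)) ^ 2 +
    ∑ i ∈ Finset.Icc 1 n,
      (Real.tanh (r - 2 * Real.pi ^ 2 * i) + 1) * Real.sin (r / (2 * Real.pi)) ^ 2

/-- The vector field of subsystem `i`: its own state comes first, the other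
subsystem's state second; `c` stands for `‖uᵢ‖_∞ / (a + 1)`. -/
def fvec (n : ℕ) (c : ℝ) (x y : ℝ) : ℝ :=
  -(25 + c) * g n x + 25 * h n y + c ^ 2

lemma tanh_mono {x y : ℝ} (hxy : x ≤ y) : Real.tanh x ≤ Real.tanh y := by
  rw [Real.tanh_eq_sinh_div_cosh, Real.tanh_eq_sinh_div_cosh,
    div_le_div_iff₀ (Real.cosh_pos x) (Real.cosh_pos y)]
  have h1 : Real.sinh (x - y) ≤ 0 := by
    rw [← Real.sinh_zero]
    exact (Real.sinh_le_sinh).2 (by linarith)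
  rw [Real.sinh_sub] at h1
  linarith

lemma neg_one_lt_tanh (x : ℝ) : -1 < Real.tanh x := by
  rw [Real.tanh_eq_sinh_div_cosh, neg_lt, ← neg_div, div_lt_one (Real.cosh_pos x)]
  have := Real.cosh_add_sinh x
  have := Real.exp_pos x
  linarith

lemma h_nonneg (n : ℕ) (r : ℝ) : 0 ≤ h n r := by
  unfold h
  apply add_nonneg (sq_nonneg _)
  apply Finset.sum_nonneg
  intro i _
  exact mul_nonneg (by have := neg_one_lt_tanh (r - 2 * Real.pi ^ 2 * i); linarith)
    (sq_nonneg _)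

lemma h_le_abs (n : ℕ) (r : ℝ) : h n r ≤ h n |r| := by
  rcases le_or_gt 0 r with hr | hr
  · rw [abs_of_nonneg hr]
  · rw [abs_of_neg hr]
    unfold h
    have hsin : Real.sin (-r / (2 * Real.pi)) ^ 2 = Real.sin (r / (2 * Real.pi)) ^ 2 := by
      rw [show -r / (2 * Real.pi) = -(r / (2 * Real.pi)) by ring, Real.sin_neg]
      ring
    rw [hsin]
    apply add_le_add_right
    apply Finset.sum_le_sum
    intro i _
    apply mul_le_mul_of_nonneg_right _ (sq_nonneg _)
    have := tanh_mono (x := r - 2 * Real.pi ^ 2 * i) (y := -r - 2 * Real.pi ^ 2 * i)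
      (by linarith)
    linarith

lemma g_neg (n : ℕ) (r : ℝ) : g n (-r) = - g n r := by
  unfold g
  rw [abs_neg]
  split_ifs with hr
  · rw [Real.sign_neg]
    have hsum : ∀ i ∈ Finset.Icc 1 n,
        (-Real.sign r) * (1 + (-Real.sign r) *
          Real.tanh (2 * (-r - (-Real.sign r) * (2 * Real.pi ^ 2 * i)))) =
        -(Real.sign r * (1 + Real.sign r *
          Real.tanh (2 * (r - Real.sign r * (2 * Real.pi ^ 2 * i))))) := by
      intro i _
      rw [show 2 * (-r - -Real.sign r * (2 * Real.pi ^ 2 * i)) =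
        -(2 * (r - Real.sign r * (2 * Real.pi ^ 2 * i))) by ring, Real.tanh_neg]
      ring
    rw [Finset.sum_congr rfl hsum, Finset.sum_neg_distrib,
      show 2 * (-r) = -(2 * r) by ring, Real.tanh_neg]
    ring
  · rw [Real.sign_neg]
    ring

lemma g_zero (n : ℕ) : g n 0 = 0 := by
  have hπ := Real.pi_pos
  have ha : (0:ℝ) ≤ a n := by
    unfold a
    positivity
  unfold g
  rw [if_pos (by simpa using ha)]
  simp [Real.sign_zero]

lemma sign_mul_g (n : ℕ) (x : ℝ) : Real.sign x * g n x = g n |x| := by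
  rcases lt_trichotomy x 0 with hx | hx | hx
  · rw [Real.sign_of_neg hx, abs_of_neg hx, g_neg]
    ring
  · subst hx
    simp [Real.sign_zero, g_zero]
  · rw [Real.sign_of_pos hx, abs_of_pos hx, one_mul]

lemma key (n : ℕ) (δ : ℝ) (hδ : δ ∈ Set.Ioo (0:ℝ) 1) (x y : ℝ)
    (H : (1 - δ) * g n |x| ≥ h n |y|) :
    Real.sign x * fvec n 0 x y ≤ -(25 * δ) * g n |x| := by
  have hsg := sign_mul_g n x
  have hh : Real.sign x * h n y ≤ h n |y| := by
    have h0 := h_nonneg n y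
    have h1 := h_le_abs n y
    have hs1 : Real.sign x ≤ 1 := by
      rcases Real.sign_apply_eq x with h | h | h <;> rw [h] <;> norm_num
    nlinarith
  have : Real.sign x * fvec n 0 x y =
      -25 * (Real.sign x * g n x) + 25 * (Real.sign x * h n y) := by
    unfold fvec; ring
  rw [this, hsg]
  nlinarith

/-- small-gain dissipation implication for the zero-input subsystems. -/
theorem small_gain_dissipation (n : ℕ) (δ : ℝ) (hδ : δ ∈ Set.Ioo (0:ℝ) 1) (x₁ x₂ : ℝ) :
    ((1 - δ) * g n |x₁| ≥ h n |x₂| →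
      Real.sign x₁ * fvec n 0 x₁ x₂ ≤ -(25 * δ) * g n |x₁|) ∧
    ((1 - δ) * g n |x₂| ≥ h n |x₁| →
      Real.sign x₂ * fvec n 0 x₂ x₁ ≤ -(25 * δ) * g n |x₂|) := by
  exact ⟨key n δ hδ x₁ x₂, key n δ hδ x₂ x₁⟩

end
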